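/- Let (X,d) be a compact metric space and f : X → X a homeomorphism. If (X,f) is minimal and equicontinuous, then (X,f) has the gluing orbit property. Moreover, the shadowing point can be taken to be the first point x₁ of the orbit sequence. -/

import Mathlib

open Filter Set Metric

namespace Paper

variable {X : Type*}

/-- Integer iteration of a homeomorphism: `f^n` for `n : ℤ`. -/
def zIter [TopologicalSpace X] (f : X ≃ₜ X) (n : ℤ) (x : X) : X :=
  if 0 ≤ n then (⇑f)^[n.toNat] x else (⇑f.symm)^[(-n).toNat] x

/-- `(X,f)` is minimal: every (two-sided) orbit is dense. -/
def Minimal [TopologicalSpace X] (f : X ≃ₜ X) : Prop :=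
  ∀ x : X, Dense (Set.range fun n : ℤ => zIter f n x)

/-- Topological transitivity. -/
def TopTransitive [TopologicalSpace X] (f : X ≃ₜ X) : Prop :=
  ∀ U V : Set X, IsOpen U → IsOpen V → U.Nonempty → V.Nonempty →
    ∃ n : ℤ, (U ∩ (zIter f n) ⁻¹' V).Nonempty

/-- Equicontinuity of the family of forward iterates. -/
def EquicontinuousSystem [MetricSpace X] (f : X → X) : Prop :=
  ∀ ε : ℝ, 0 < ε → ∃ δ : ℝ, 0 < δ ∧
    ∀ x y : X, dist x y < δ → ∀ n : ℕ, dist (f^[n] x) (f^[n] y) < ε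

/-- The transition times `s_j` (0-indexed: `s 0 = 0`,
`s (j+1) = s j + m_j + t_j - 1`) for an orbit sequence `C` (with lengths `m_j = (C j).2`)
and a gap `g`. -/
def sTimes (C : ℕ → X × ℕ) (g : ℕ → ℕ) : ℕ → ℕ
  | 0 => 0
  | j + 1 => sTimes C g j + (C j).2 + g j - 1

/-- `(C, g)` (an orbit sequence of rank `k` together with a gap) is `ε`-shadowed by `z`. -/
def Shadows [MetricSpace X] (f : X → X) (k : ℕ) (C : ℕ → X × ℕ) (g : ℕ → ℕ)
    (ε : ℝ) (z : X) : Prop :=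
  ∀ j < k, ∀ l < (C j).2, dist (f^[sTimes C g j + l] z) (f^[l] (C j).1) < ε

/-- The gluing orbit property. -/
def GluingOrbit [MetricSpace X] (f : X → X) : Prop :=
  ∀ ε : ℝ, 0 < ε → ∃ M : ℕ, 0 < M ∧
    ∀ k : ℕ, 0 < k → ∀ C : ℕ → X × ℕ, (∀ j < k, 0 < (C j).2) →
      ∃ g : ℕ → ℕ, (∀ j < k - 1, 0 < g j ∧ g j ≤ M) ∧
        ∃ z : X, Shadows f k C g ε z

/-- The specification property, at scale `ε` with constant `M`. -/
def SpecWith [MetricSpace X] (f : X → X) (ε : ℝ) (M : ℕ) : Prop :=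
  ∀ k : ℕ, 0 < k → ∀ C : ℕ → X × ℕ, (∀ j < k, 0 < (C j).2) →
    ∀ g : ℕ → ℕ, (∀ j < k - 1, M ≤ g j) →
      ∃ z : X, Shadows f k C g ε z

/-- The specification property. -/
def Specification [MetricSpace X] (f : X → X) : Prop :=
  ∀ ε : ℝ, 0 < ε → ∃ M : ℕ, 0 < M ∧ SpecWith f ε M

/-- The periodic gluing orbit property. -/
def PerGluingOrbit [MetricSpace X] (f : X → X) : Prop :=
  ∀ ε : ℝ, 0 < ε → ∃ M : ℕ, 0 < M ∧
    ∀ k : ℕ, 0 < k → ∀ C : ℕ → X × ℕ, (∀ j < k, 0 < (C j).2) →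
      ∃ t : ℕ, 0 < t ∧ t ≤ M ∧
        ∃ g : ℕ → ℕ, (∀ j < k - 1, 0 < g j ∧ g j ≤ M) ∧
          ∃ z : X, Shadows f k C g ε z ∧
            f^[sTimes C g (k - 1) + (C (k - 1)).2 + t] z = z

/-- `E` is an `(n,ε)`-separated set. -/
def IsSepSet [MetricSpace X] (f : X → X) (n : ℕ) (ε : ℝ) (E : Set X) : Prop :=
  ∀ x ∈ E, ∀ y ∈ E, x ≠ y → ∃ k < n, ε < dist (f^[k] x) (f^[k] y)

/-- `s(n,ε)`: the maximal cardinality of an `(n,ε)`-separated subset of `X`. -/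
noncomputable def sepNum [MetricSpace X] (f : X → X) (n : ℕ) (ε : ℝ) : ℕ :=
  sSup {N : ℕ | ∃ E : Finset X, IsSepSet f n ε ↑E ∧ E.card = N}

/-- Topological entropy `h(f) = lim_{ε → 0⁺} limsup_n (ln s(n,ε))/n`; since the inner
quantity is monotone as `ε` decreases, the limit equals the supremum over `ε > 0`. -/
noncomputable def topEnt [MetricSpace X] (f : X → X) : EReal :=
  ⨆ (ε : ℝ) (_ : 0 < ε),
    Filter.limsup (fun n : ℕ => ((Real.log (sepNum f n ε) / n : ℝ) : EReal)) Filter.atTop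

/-- The set of periodic points of period at most `n`. -/
def perPts (f : X → X) (n : ℕ) : Set X :=
  {x | ∃ m : ℕ, 0 < m ∧ m ≤ n ∧ f^[m] x = x}

open Classical in
/-- `p(f) = limsup_n (ln p_n(f))/n`, the exponential growth rate of periodic points
(`⊤` contributions when there are infinitely many such points). -/
noncomputable def perGrowth (f : X → X) : EReal :=
  Filter.limsup (fun n : ℕ =>
      if h : (perPts f n).Finite then ((Real.log (perPts f n).ncard / n : ℝ) : EReal) else ⊤)
    Filter.atTop

/-- The lower box dimension of `X`, `liminf_{ε→0⁺} ln s(1,ε) / (-ln ε)`. -/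
noncomputable def lowerBoxDim [MetricSpace X] (f : X → X) : EReal :=
  Filter.liminf (fun ε : ℝ => ((Real.log (sepNum f 1 ε) / (-Real.log ε) : ℝ) : EReal))
    (nhdsWithin 0 (Set.Ioi 0))



































/-! Semiflow case -/

/-- `φ` is a continuous semiflow on `X` (for nonnegative times). -/
def IsSemiflow [TopologicalSpace X] (φ : ℝ → X → X) : Prop :=
  (∀ x : X, φ 0 x = x) ∧
    (∀ s t : ℝ, 0 ≤ s → 0 ≤ t → ∀ x : X, φ (s + t) x = φ s (φ t x)) ∧
      Continuous fun p : ℝ × X => φ p.1 p.2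

/-- Minimality of a semiflow: every forward orbit is dense. -/
def MinimalFlow [TopologicalSpace X] (φ : ℝ → X → X) : Prop :=
  ∀ x : X, Dense {y : X | ∃ t : ℝ, 0 ≤ t ∧ φ t x = y}

/-- Transition times for the semiflow gluing: `s 0 = 0`, `s (j+1) = s j + m_j + t_j`. -/
def sFlow (C : ℕ → X × ℝ) (g : ℕ → ℝ) : ℕ → ℝ
  | 0 => 0
  | j + 1 => sFlow C g j + (C j).2 + g j

/-- Gluing orbit property for a semiflow. -/
def GluingFlow [MetricSpace X] (φ : ℝ → X → X) : Prop :=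
  ∀ ε : ℝ, 0 < ε → ∃ M : ℝ, 0 < M ∧
    ∀ k : ℕ, 0 < k → ∀ C : ℕ → X × ℝ, (∀ j < k, 0 ≤ (C j).2) →
      ∃ g : ℕ → ℝ, (∀ j < k - 1, 0 ≤ g j ∧ g j ≤ M) ∧
        ∃ z : X, ∀ j < k, ∀ t ∈ Set.Icc (0 : ℝ) (C j).2,
          dist (φ (sFlow C g j + t) z) (φ t (C j).1) < ε

/-- `E` is a `(T,ε)`-separated set for the semiflow `φ`. -/
def IsSepFlow [MetricSpace X] (φ : ℝ → X → X) (T ε : ℝ) (E : Set X) : Prop :=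
  ∀ x ∈ E, ∀ y ∈ E, x ≠ y → ∃ t ∈ Set.Icc (0 : ℝ) T, ε < dist (φ t x) (φ t y)

/-- `s(T,ε)` for the semiflow. -/
noncomputable def sepFlow [MetricSpace X] (φ : ℝ → X → X) (T ε : ℝ) : ℕ :=
  sSup {N : ℕ | ∃ E : Finset X, IsSepFlow φ T ε ↑E ∧ E.card = N}

/-- Topological entropy of a semiflow. -/
noncomputable def topEntFlow [MetricSpace X] (φ : ℝ → X → X) : EReal :=
  ⨆ (ε : ℝ) (_ : 0 < ε),
    Filter.limsup (fun T : ℝ => ((Real.log (sepFlow φ T ε) / T : ℝ) : EReal)) Filter.atTop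

lemma continuous_zIter [TopologicalSpace X] (f : X ≃ₜ X) (n : ℤ) :
    Continuous (zIter f n) := by
  unfold zIter
  split_ifs
  · exact f.continuous.iterate _
  · exact f.symm.continuous.iterate _

lemma iterate_apply_symm [TopologicalSpace X] (f : X ≃ₜ X) (n : ℕ) (y : X) :
    (⇑f)^[n] ((⇑f.symm)^[n] y) = y :=
  (Function.LeftInverse.iterate f.apply_symm_apply n) y

lemma zIter_shift [TopologicalSpace X] (f : X ≃ₜ X) (n : ℤ) (p : ℕ)
    (h : n.natAbs ≤ p) (w : X) :
    (⇑f)^[((p : ℤ) + n).toNat] w = (⇑f)^[p] (zIter f n w) := by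
  unfold zIter
  split_ifs with hn
  · have : ((p : ℤ) + n).toNat = p + n.toNat := by omega
    rw [this, Function.iterate_add_apply]
  · push_neg at hn
    have hq : (-n).toNat ≤ p := by omega
    have h1 : ((p : ℤ) + n).toNat = p - (-n).toNat := by omega
    have h2 : p = (p - (-n).toNat) + (-n).toNat := by omega
    rw [h1]
    conv_rhs => rw [h2]
    rw [Function.iterate_add_apply, iterate_apply_symm]

lemma almost_period [MetricSpace X] [CompactSpace X] (f : X ≃ₜ X)
    (heq : EquicontinuousSystem (⇑f)) (η : ℝ) (hη : 0 < η) (L : ℕ) :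
    ∃ p : ℕ, L < p ∧ ∀ y : X, dist ((⇑f)^[p] y) y < η := by
  obtain ⟨α, hα, hmod⟩ := heq (η / 5) (by linarith)
  set β := min α (η / 5) with hβdef
  have hβ : 0 < β := lt_min hα (by linarith)
  obtain ⟨s, hsfin, hscov⟩ := totallyBounded_iff.mp
    (isCompact_univ : IsCompact (univ : Set X)).totallyBounded β hβ
  have hν : ∀ x : X, ∃ y : ↥s, dist x ↑y < β := by
    intro x
    have := hscov (mem_univ x)
    simp only [mem_iUnion] at this
    obtain ⟨y, hy, hxy⟩ := this
    exact ⟨⟨y, hy⟩, mem_ball.mp hxy⟩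
  choose ν hνd using hν
  haveI := hsfin.to_subtype
  have hfib := Finite.exists_infinite_fiber
    (fun n : ℕ => (fun z : ↥s => ν ((⇑f)^[n] ↑z)))
  obtain ⟨c, hc⟩ := hfib
  have hinf : ((fun n : ℕ => (fun z : ↥s => ν ((⇑f)^[n] ↑z))) ⁻¹' {c}).Infinite :=
    Set.infinite_coe_iff.mp hc
  obtain ⟨n, hn⟩ := hinf.nonempty
  have hbig : ∃ n' ∈ (fun n : ℕ => (fun z : ↥s => ν ((⇑f)^[n] ↑z))) ⁻¹' {c}, n + L < n' := by
    by_contra hcon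
    push_neg at hcon
    exact hinf (Set.Finite.subset (Set.finite_Iic (n + L)) fun m hm => hcon m hm)
  obtain ⟨n', hn', hnn'⟩ := hbig
  refine ⟨n' - n, by omega, fun y => ?_⟩
  -- key: ∀ x, dist (f^[n'] x) (f^[n] x) < η
  have key : ∀ x : X, dist ((⇑f)^[n'] x) ((⇑f)^[n] x) < η := by
    intro x
    have h1 : dist ((⇑f)^[n] x) ((⇑f)^[n] ↑(ν x)) < η / 5 :=
      hmod x (ν x) (lt_of_lt_of_le (hνd x) (min_le_left _ _)) n
    have h1' : dist ((⇑f)^[n'] x) ((⇑f)^[n'] ↑(ν x)) < η / 5 :=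
      hmod x (ν x) (lt_of_lt_of_le (hνd x) (min_le_left _ _)) n'
    have heqν : ν ((⇑f)^[n] ↑(ν x)) = ν ((⇑f)^[n'] ↑(ν x)) := by
      have e1 : (fun z : ↥s => ν ((⇑f)^[n] ↑z)) = c := Set.mem_singleton_iff.mp hn
      have e2 : (fun z : ↥s => ν ((⇑f)^[n'] ↑z)) = c := Set.mem_singleton_iff.mp hn'
      exact congrFun (e1.trans e2.symm) (ν x)
    have h2 : dist ((⇑f)^[n] ↑(ν x)) ((⇑f)^[n'] ↑(ν x)) < 2 * β := by
      calc dist ((⇑f)^[n] ↑(ν x)) ((⇑f)^[n'] ↑(ν x))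
          ≤ dist ((⇑f)^[n] ↑(ν x)) ↑(ν ((⇑f)^[n] ↑(ν x)))
            + dist ↑(ν ((⇑f)^[n] ↑(ν x))) ((⇑f)^[n'] ↑(ν x)) := dist_triangle _ _ _
        _ < β + β := by
            refine add_lt_add (hνd _) ?_
            rw [heqν, dist_comm]
            exact hνd _
        _ = 2 * β := by ring
    have hβ5 : β ≤ η / 5 := min_le_right _ _
    calc dist ((⇑f)^[n'] x) ((⇑f)^[n] x)
        ≤ dist ((⇑f)^[n'] x) ((⇑f)^[n'] ↑(ν x)) + dist ((⇑f)^[n'] ↑(ν x)) ((⇑f)^[n] x) :=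
          dist_triangle _ _ _
      _ ≤ dist ((⇑f)^[n'] x) ((⇑f)^[n'] ↑(ν x)) +
          (dist ((⇑f)^[n'] ↑(ν x)) ((⇑f)^[n] ↑(ν x)) + dist ((⇑f)^[n] ↑(ν x)) ((⇑f)^[n] x)) :=
          by gcongr; exact dist_triangle _ _ _
      _ < η / 5 + (2 * β + η / 5) := by
          refine add_lt_add h1' (add_lt_add ?_ ?_)
          · rw [dist_comm]; exact h2
          · rw [dist_comm]; exact h1
      _ ≤ η / 5 + (2 * (η / 5) + η / 5) := by linarith
      _ < η := by linarith
  have hx : (⇑f)^[n] ((⇑f.symm)^[n] y) = y := iterate_apply_symm f n y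
  have hsplit : (⇑f)^[n'] ((⇑f.symm)^[n] y) = (⇑f)^[n' - n] y := by
    have h3 : n' = (n' - n) + n := by omega
    conv_lhs => rw [h3]
    rw [Function.iterate_add_apply, hx]
  have := key ((⇑f.symm)^[n] y)
  rwa [hx, hsplit] at this

lemma uniform_visit [MetricSpace X] [CompactSpace X] (f : X ≃ₜ X)
    (hmin : Minimal f) (η : ℝ) (hη : 0 < η) :
    ∃ L : ℕ, ∀ w x : X, ∃ n : ℤ, n.natAbs ≤ L ∧ dist (zIter f n w) x < η := by
  have step1 : ∀ x : X, ∃ Lx : ℕ, ∀ w : X, ∃ n : ℤ,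
      n.natAbs ≤ Lx ∧ dist (zIter f n w) x < η / 2 := by
    intro x
    have hcov : (univ : Set X) ⊆ ⋃ n : ℤ, (zIter f n) ⁻¹' ball x (η / 2) := by
      intro w _
      obtain ⟨n, hd⟩ := DenseRange.exists_dist_lt (hmin w) x (by linarith : (0:ℝ) < η / 2)
      simp only [mem_iUnion, mem_preimage, mem_ball]
      exact ⟨n, by rw [dist_comm] at hd; exact hd⟩
    obtain ⟨t, ht⟩ := isCompact_univ.elim_finite_subcover _
      (fun n : ℤ => (continuous_zIter f n).isOpen_preimage _ isOpen_ball) hcov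
    refine ⟨t.sup fun n => n.natAbs, fun w => ?_⟩
    have := ht (mem_univ w)
    simp only [mem_iUnion, mem_preimage, mem_ball] at this
    obtain ⟨n, hnt, hd⟩ := this
    exact ⟨n, Finset.le_sup hnt, hd⟩
  choose Lfun hLfun using step1
  have hcov2 : (univ : Set X) ⊆ ⋃ x : X, ball x (η / 2) := fun x _ =>
    mem_iUnion.mpr ⟨x, mem_ball_self (by linarith)⟩
  obtain ⟨t, ht⟩ := isCompact_univ.elim_finite_subcover _
    (fun x : X => isOpen_ball) hcov2
  refine ⟨t.sup Lfun, fun w x => ?_⟩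
  have := ht (mem_univ x)
  simp only [mem_iUnion, mem_ball] at this
  obtain ⟨x', hx't, hxx'⟩ := this
  obtain ⟨n, hn, hd⟩ := hLfun x' w
  refine ⟨n, le_trans hn (Finset.le_sup hx't), ?_⟩
  calc dist (zIter f n w) x ≤ dist (zIter f n w) x' + dist x' x := dist_triangle _ _ _
    _ < η / 2 + η / 2 := add_lt_add hd (by rwa [dist_comm])
    _ = η := by ring

lemma uniform_hit [MetricSpace X] [CompactSpace X] (f : X ≃ₜ X)
    (hmin : Minimal f) (heq : EquicontinuousSystem (⇑f)) (η : ℝ) (hη : 0 < η) :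
    ∃ M : ℕ, 0 < M ∧ ∀ w x : X, ∃ t : ℕ, 1 ≤ t ∧ t ≤ M ∧
      dist ((⇑f)^[t] w) x < η := by
  obtain ⟨L, hL⟩ := uniform_visit f hmin (η / 3) (by linarith)
  obtain ⟨p, hp, hper⟩ := almost_period f heq (η / 3) (by linarith) L
  refine ⟨p + L, by omega, fun w x => ?_⟩
  obtain ⟨n, hn, hd⟩ := hL w x
  refine ⟨((p : ℤ) + n).toNat, by omega, by omega, ?_⟩
  rw [zIter_shift f n p (by omega) w]
  calc dist ((⇑f)^[p] (zIter f n w)) x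
      ≤ dist ((⇑f)^[p] (zIter f n w)) (zIter f n w) + dist (zIter f n w) x :=
        dist_triangle _ _ _
    _ < η / 3 + η / 3 := add_lt_add (hper _) hd
    _ < η := by linarith

theorem stmt14 [MetricSpace X] [CompactSpace X] (f : X ≃ₜ X)
    (hmin : Minimal f) (heq : EquicontinuousSystem (⇑f)) :
    ∀ ε : ℝ, 0 < ε → ∃ M : ℕ, 0 < M ∧
      ∀ k : ℕ, 0 < k → ∀ C : ℕ → X × ℕ, (∀ j < k, 0 < (C j).2) →
        ∃ g : ℕ → ℕ, (∀ j < k - 1, 0 < g j ∧ g j ≤ M) ∧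
          Shadows (⇑f) k C g ε ((C 0).1) := by
  intro ε hε
  obtain ⟨η, hη, hmod⟩ := heq ε hε
  obtain ⟨M, hM, hhit⟩ := uniform_hit f hmin heq η hη
  refine ⟨M, hM, fun k hk C hC => ?_⟩
  set z := (C 0).1 with hz
  choose T hT1 hT2 hT3 using hhit
  let s : ℕ → ℕ := fun j => Nat.rec (motive := fun _ => ℕ) 0
    (fun j sj => sj + (C j).2 + T ((⇑f)^[sj + (C j).2 - 1] z) (C (j+1)).1 - 1) j
  let g : ℕ → ℕ := fun j => T ((⇑f)^[s j + (C j).2 - 1] z) (C (j+1)).1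
  have hs0 : s 0 = 0 := rfl
  have hgdef : ∀ j, g j = T ((⇑f)^[s j + (C j).2 - 1] z) (C (j+1)).1 := fun j => rfl
  have hsrec : ∀ j, s (j+1) = s j + (C j).2 + g j - 1 := fun j => rfl
  have hsg : ∀ j, sTimes C g j = s j := by
    intro j
    induction j with
    | zero => rfl
    | succ j ih =>
      have : sTimes C g (j+1) = sTimes C g j + (C j).2 + g j - 1 := rfl
      rw [this, ih, hsrec]
  have key : ∀ j < k, dist ((⇑f)^[s j] z) (C j).1 < η := by
    intro j hj
    cases j with
    | zero =>
      rw [hs0]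
      simpa [hz] using hη
    | succ j =>
      have hm : 0 < (C j).2 := hC j (by omega)
      have ht1 := hT1 ((⇑f)^[s j + (C j).2 - 1] z) (C (j+1)).1
      have hsplit : s (j+1)
          = T ((⇑f)^[s j + (C j).2 - 1] z) (C (j+1)).1 + (s j + (C j).2 - 1) := by
        rw [hsrec, hgdef]
        omega
      rw [hsplit, Function.iterate_add_apply]
      exact hT3 _ _
  refine ⟨g, fun j _ => ⟨hT1 _ _, hT2 _ _⟩, ?_⟩
  intro j hj l hl
  rw [hsg]
  have hcomm : s j + l = l + s j := by omega
  rw [hcomm, Function.iterate_add_apply]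
  exact hmod _ _ (key j hj) l


end Paper
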